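/- For the population Rayleigh regression depth with Õ(θ) = sup_{u ∈ S^d} |E(uᵀ(Y - Wᵀθ)W)| / sqrt(Var(uᵀYW)): if E(ε|X) = 0 then E((Y - Wᵀθ)W) = E(WWᵀ)(θ₀ - θ), so Õ(θ₀) = 0 and PRD^r(θ₀) = 1 is the maximum; moreover if E(WWᵀ) is positive definite the maximizer θ₀ is unique. -/

import Mathlib

open MeasureTheory Matrix

theorem stmt14 {d : ℕ} {Ω : Type*} [MeasurableSpace Ω] (μ : Measure Ω) [IsProbabilityMeasure μ]
    (X : Ω → Fin d → ℝ) (ε : Ω → ℝ) (Y : Ω → ℝ) (θ₀ : Fin (d + 1) → ℝ)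
    (hX : Measurable X) (hε : Measurable ε)
    (W : Ω → Fin (d + 1) → ℝ) (hW : ∀ ω, W ω = Fin.cons 1 (X ω))
    (hY : ∀ ω, Y ω = W ω ⬝ᵥ θ₀ + ε ω)
    (hcond : μ[ε | MeasurableSpace.comap X inferInstance] =ᵐ[μ] 0)
    (hεW : ∀ i, Integrable (fun ω => ε ω * W ω i) μ)
    (hWW : ∀ i j, Integrable (fun ω => W ω i * W ω j) μ)
    (Sbar : Matrix (Fin (d + 1)) (Fin (d + 1)) ℝ)
    (hSbar : ∀ i j, Sbar i j = ∫ ω, W ω i * W ω j ∂μ)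
    (hSbarpd : Sbar.PosDef)
    (Stil : Matrix (Fin (d + 1)) (Fin (d + 1)) ℝ)
    (hStil : ∀ i j, Stil i j = ∫ ω, (Y ω * W ω i - ∫ ω', Y ω' * W ω' i ∂μ) *
      (Y ω * W ω j - ∫ ω', Y ω' * W ω' j ∂μ) ∂μ)
    (hStilpd : Stil.PosDef) :
    (∀ θ : Fin (d + 1) → ℝ,
      (fun i => ∫ ω, (Y ω - W ω ⬝ᵥ θ) * W ω i ∂μ) = Sbar.mulVec (θ₀ - θ)) ∧
    (⨆ u : {u : Fin (d + 1) → ℝ // Real.sqrt (∑ i, u i ^ 2) = 1},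
        |u.1 ⬝ᵥ Sbar.mulVec (θ₀ - θ₀)| / Real.sqrt (u.1 ⬝ᵥ Stil.mulVec u.1)) = 0 ∧
    (1 : ℝ) / (1 + ⨆ u : {u : Fin (d + 1) → ℝ // Real.sqrt (∑ i, u i ^ 2) = 1},
        |u.1 ⬝ᵥ Sbar.mulVec (θ₀ - θ₀)| / Real.sqrt (u.1 ⬝ᵥ Stil.mulVec u.1)) = 1 ∧
    (∀ θ : Fin (d + 1) → ℝ,
      (1 : ℝ) / (1 + ⨆ u : {u : Fin (d + 1) → ℝ // Real.sqrt (∑ i, u i ^ 2) = 1},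
        |u.1 ⬝ᵥ Sbar.mulVec (θ₀ - θ)| / Real.sqrt (u.1 ⬝ᵥ Stil.mulVec u.1)) ≤ 1) ∧
    ∀ θ : Fin (d + 1) → ℝ,
      (1 : ℝ) / (1 + ⨆ u : {u : Fin (d + 1) → ℝ // Real.sqrt (∑ i, u i ^ 2) = 1},
        |u.1 ⬝ᵥ Sbar.mulVec (θ₀ - θ)| / Real.sqrt (u.1 ⬝ᵥ Stil.mulVec u.1)) = 1 → θ = θ₀ := by
  -- E[ε · W i] = 0 from the conditional expectation assumption
  have key : ∀ i, ∫ ω, ε ω * W ω i ∂μ = 0 := by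
    set m := MeasurableSpace.comap X inferInstance with hm
    have hm_le := hX.comap_le
    have hXm : @Measurable Ω _ m _ X := Measurable.of_comap_le le_rfl
    have hWm : ∀ i, @StronglyMeasurable Ω ℝ _ m (fun ω => W ω i) := by
      intro i
      have hc : Measurable (fun x : Fin d → ℝ => (Fin.cons (1:ℝ) x : Fin (d+1) → ℝ) i) := by
        refine Fin.cases ?_ ?_ i
        · simp
        · intro j; simpa using measurable_pi_apply j
      have hmeas : @Measurable Ω ℝ m _ (fun ω => W ω i) := by
        have heq : (fun ω => W ω i) = (fun x : Fin d → ℝ => (Fin.cons (1:ℝ) x : Fin (d+1) → ℝ) i) ∘ X := by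
          funext ω; simp [hW]
        rw [heq]; exact hc.comp hXm
      exact hmeas.stronglyMeasurable
    intro i
    have hεint : Integrable ε μ := by
      have := hεW 0
      simpa [hW] using this
    have hint : Integrable ((fun ω => W ω i) * ε) μ := by
      have := hεW i
      exact this.congr (Filter.Eventually.of_forall fun ω => mul_comm (ε ω) (W ω i))
    have h1 := condExp_mul_of_stronglyMeasurable_left (μ := μ) (hWm i) hint hεint
    have h3 := integral_condExp (μ := μ) (f := (fun ω => W ω i) * ε) hm_le
    calc ∫ ω, ε ω * W ω i ∂μ = ∫ ω, ((fun ω => W ω i) * ε) ω ∂μ := by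
          simp [mul_comm]
      _ = ∫ ω, (μ[(fun ω => W ω i) * ε | m]) ω ∂μ := h3.symm
      _ = 0 := by
          have h2 : (fun ω => W ω i) * μ[ε|m] =ᵐ[μ] 0 := by
            filter_upwards [hcond] with ω h; simp [h]
          rw [integral_congr_ae (h1.trans h2)]; simp
  -- Part 1: the normal equations
  have part1 : ∀ θ : Fin (d + 1) → ℝ,
      (fun i => ∫ ω, (Y ω - W ω ⬝ᵥ θ) * W ω i ∂μ) = Sbar.mulVec (θ₀ - θ) := by
    intro θ; funext i
    have expand : ∀ ω, (Y ω - W ω ⬝ᵥ θ) * W ω i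
        = (∑ j, (θ₀ - θ) j * (W ω j * W ω i)) + ε ω * W ω i := by
      intro ω
      rw [hY ω]
      have h1 : ∑ j, (θ₀ - θ) j * (W ω j * W ω i)
          = (W ω ⬝ᵥ θ₀ - W ω ⬝ᵥ θ) * W ω i := by
        rw [← dotProduct_sub, dotProduct, Finset.sum_mul]
        exact Finset.sum_congr rfl fun j _ => by simp [Pi.sub_apply]; ring
      rw [h1]; ring
    have hint : ∀ j : Fin (d+1), Integrable (fun ω => (θ₀ - θ) j * (W ω j * W ω i)) μ :=
      fun j => (hWW j i).const_mul _
    calc ∫ ω, (Y ω - W ω ⬝ᵥ θ) * W ω i ∂μ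
        = ∫ ω, ((∑ j, (θ₀ - θ) j * (W ω j * W ω i)) + ε ω * W ω i) ∂μ := by
          exact integral_congr_ae (Filter.Eventually.of_forall expand)
      _ = (∫ ω, ∑ j, (θ₀ - θ) j * (W ω j * W ω i) ∂μ) + ∫ ω, ε ω * W ω i ∂μ :=
          integral_add (integrable_finset_sum _ fun j _ => hint j) (hεW i)
      _ = ∑ j, (θ₀ - θ) j * ∫ ω, W ω j * W ω i ∂μ := by
          rw [key i, add_zero, integral_finset_sum _ fun j _ => hint j]
          exact Finset.sum_congr rfl fun j _ => integral_const_mul _ _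
      _ = Sbar.mulVec (θ₀ - θ) i := by
          rw [mulVec, dotProduct]
          exact Finset.sum_congr rfl fun j _ => by
            rw [hSbar i j, integral_congr_ae (Filter.Eventually.of_forall fun ω => by ring : (fun ω => W ω j * W ω i) =ᵐ[μ] fun ω => W ω i * W ω j)]; ring
  -- unit basis vectors
  have hunit : ∀ j : Fin (d+1), Real.sqrt (∑ i, ((Pi.single j (1:ℝ) : Fin (d+1) → ℝ)) i ^ 2) = 1 := by
    intro j
    rw [Real.sqrt_eq_one]
    rw [Finset.sum_eq_single j]
    · simp
    · intro b _ hb; simp [Pi.single_apply, hb]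
    · simp
  haveI hne : Nonempty {u : Fin (d + 1) → ℝ // Real.sqrt (∑ i, u i ^ 2) = 1} :=
    ⟨⟨Pi.single 0 1, hunit 0⟩⟩
  -- the sphere is compact
  set sph : Set (Fin (d+1) → ℝ) := {u | Real.sqrt (∑ i, u i ^ 2) = 1} with hsph
  have hsum_cont : Continuous fun u : Fin (d+1) → ℝ => ∑ i, u i ^ 2 :=
    continuous_finset_sum _ fun i _ => (continuous_apply i).pow 2
  have hclosed : IsClosed sph :=
    isClosed_eq (Real.continuous_sqrt.comp hsum_cont) continuous_const
  have hbdd : Bornology.IsBounded sph := by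
    refine (Metric.isBounded_closedBall (x := (0 : Fin (d+1) → ℝ)) (r := 1)).subset ?_
    intro u hu
    have hsum : ∑ i, u i ^ 2 = 1 := Real.sqrt_eq_one.mp hu
    have hcoord : ∀ i, |u i| ≤ 1 := by
      intro i
      have h1 : u i ^ 2 ≤ 1 := by
        rw [← hsum]
        exact Finset.single_le_sum (fun j _ => sq_nonneg (u j)) (Finset.mem_univ i)
      nlinarith [abs_nonneg (u i), sq_abs (u i)]
    simp only [Metric.mem_closedBall, dist_zero_right]
    exact (pi_norm_le_iff_of_nonneg zero_le_one).mpr fun i => by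
      simpa [Real.norm_eq_abs] using hcoord i
  have hcompact : IsCompact sph := Metric.isCompact_of_isClosed_isBounded hclosed hbdd
  -- min of the quadratic form on the sphere
  have hq_cont : Continuous fun u : Fin (d+1) → ℝ => u ⬝ᵥ Stil.mulVec u := by
    simp only [mulVec, dotProduct]
    exact continuous_finset_sum _ fun i _ => (continuous_apply i).mul
      (continuous_finset_sum _ fun j _ => continuous_const.mul (continuous_apply j))
  obtain ⟨u₀, hu₀s, hu₀min⟩ := hcompact.exists_isMinOn ⟨Pi.single 0 1, hunit 0⟩
    hq_cont.continuousOn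
  set c : ℝ := u₀ ⬝ᵥ Stil.mulVec u₀ with hc
  have hcpos : 0 < c := by
    have hu₀ne : u₀ ≠ 0 := by
      intro h
      rw [hsph] at hu₀s
      simp [h, Set.mem_setOf_eq] at hu₀s
    simpa using hStilpd.dotProduct_mulVec_pos hu₀ne
  have hqlow : ∀ u : {u : Fin (d + 1) → ℝ // Real.sqrt (∑ i, u i ^ 2) = 1},
      c ≤ u.1 ⬝ᵥ Stil.mulVec u.1 := fun u => hu₀min u.2
  -- boundedness of the family of terms
  have hterm_nonneg : ∀ (θ : Fin (d+1) → ℝ) (u : {u : Fin (d + 1) → ℝ // Real.sqrt (∑ i, u i ^ 2) = 1}),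
      0 ≤ |u.1 ⬝ᵥ Sbar.mulVec (θ₀ - θ)| / Real.sqrt (u.1 ⬝ᵥ Stil.mulVec u.1) :=
    fun θ u => div_nonneg (abs_nonneg _) (Real.sqrt_nonneg _)
  have hbound : ∀ θ : Fin (d+1) → ℝ, BddAbove (Set.range fun u : {u : Fin (d + 1) → ℝ // Real.sqrt (∑ i, u i ^ 2) = 1} =>
      |u.1 ⬝ᵥ Sbar.mulVec (θ₀ - θ)| / Real.sqrt (u.1 ⬝ᵥ Stil.mulVec u.1)) := by
    intro θ
    set v := Sbar.mulVec (θ₀ - θ) with hv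
    refine ⟨Real.sqrt (∑ i, v i ^ 2) / Real.sqrt c, ?_⟩
    rintro x ⟨u, rfl⟩
    have hnum : |u.1 ⬝ᵥ v| ≤ Real.sqrt (∑ i, v i ^ 2) := by
      have hcs := Finset.sum_mul_sq_le_sq_mul_sq Finset.univ u.1 v
      have hsum : ∑ i, u.1 i ^ 2 = 1 := Real.sqrt_eq_one.mp u.2
      have h2 : (u.1 ⬝ᵥ v) ^ 2 ≤ ∑ i, v i ^ 2 := by
        rw [dotProduct]; calc (∑ i, u.1 i * v i)^2 ≤ (∑ i, u.1 i ^2) * ∑ i, v i ^2 := hcs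
          _ = ∑ i, v i ^ 2 := by rw [hsum, one_mul]
      calc |u.1 ⬝ᵥ v| = Real.sqrt ((u.1 ⬝ᵥ v)^2) := (Real.sqrt_sq_eq_abs _).symm
        _ ≤ Real.sqrt (∑ i, v i ^ 2) := Real.sqrt_le_sqrt h2
    have hden : Real.sqrt c ≤ Real.sqrt (u.1 ⬝ᵥ Stil.mulVec u.1) := Real.sqrt_le_sqrt (hqlow u)
    exact div_le_div₀ (Real.sqrt_nonneg _) hnum (Real.sqrt_pos.mpr hcpos) hden
  -- Part 2
  have part2 : (⨆ u : {u : Fin (d + 1) → ℝ // Real.sqrt (∑ i, u i ^ 2) = 1},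
      |u.1 ⬝ᵥ Sbar.mulVec (θ₀ - θ₀)| / Real.sqrt (u.1 ⬝ᵥ Stil.mulVec u.1)) = 0 := by
    have h0 : ∀ u : {u : Fin (d + 1) → ℝ // Real.sqrt (∑ i, u i ^ 2) = 1},
        |u.1 ⬝ᵥ Sbar.mulVec (θ₀ - θ₀)| / Real.sqrt (u.1 ⬝ᵥ Stil.mulVec u.1) = 0 := by
      intro u; simp
    simp only [h0]
    exact ciSup_const
  refine ⟨part1, part2, ?_, ?_, ?_⟩
  · rw [part2]; norm_num
  · intro θ
    have hS : (0:ℝ) ≤ ⨆ u : {u : Fin (d + 1) → ℝ // Real.sqrt (∑ i, u i ^ 2) = 1},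
        |u.1 ⬝ᵥ Sbar.mulVec (θ₀ - θ)| / Real.sqrt (u.1 ⬝ᵥ Stil.mulVec u.1) :=
      Real.iSup_nonneg (hterm_nonneg θ)
    rw [div_le_one (by linarith)]
    linarith
  · intro θ hθ
    set S := ⨆ u : {u : Fin (d + 1) → ℝ // Real.sqrt (∑ i, u i ^ 2) = 1},
        |u.1 ⬝ᵥ Sbar.mulVec (θ₀ - θ)| / Real.sqrt (u.1 ⬝ᵥ Stil.mulVec u.1) with hSdef
    have hSnn : (0:ℝ) ≤ S := Real.iSup_nonneg (hterm_nonneg θ)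
    have hS0 : S = 0 := by
      have h1 : (1:ℝ) + S ≠ 0 := by linarith
      field_simp at hθ
      linarith
    have hterm0 : ∀ u : {u : Fin (d + 1) → ℝ // Real.sqrt (∑ i, u i ^ 2) = 1},
        |u.1 ⬝ᵥ Sbar.mulVec (θ₀ - θ)| / Real.sqrt (u.1 ⬝ᵥ Stil.mulVec u.1) = 0 := by
      intro u
      have hle := le_ciSup (hbound θ) u
      rw [← hSdef, hS0] at hle
      exact le_antisymm hle (hterm_nonneg θ u)
    have hv0 : Sbar.mulVec (θ₀ - θ) = 0 := by
      funext j
      have h := hterm0 ⟨Pi.single j 1, hunit j⟩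
      have hdenpos : 0 < Real.sqrt ((Pi.single j (1:ℝ)) ⬝ᵥ Stil.mulVec (Pi.single j 1)) :=
        Real.sqrt_pos.mpr (lt_of_lt_of_le hcpos (hqlow ⟨Pi.single j 1, hunit j⟩))
      have := (div_eq_zero_iff.mp h).resolve_right (ne_of_gt hdenpos)
      rw [abs_eq_zero, single_dotProduct, one_mul] at this
      simpa using this
    have hdiff : θ₀ - θ = 0 := by
      by_contra hne0
      have := hSbarpd.dotProduct_mulVec_pos hne0
      rw [show Sbar *ᵥ (θ₀ - θ) = 0 from hv0] at this
      simp at this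
    exact (sub_eq_zero.mp hdiff).symm
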